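/- Let X be a separable Banach space, let p ∈ (0,1), let (b_j) be a nonincreasing nonnegative sequence with Σ_j b_j^p < ∞, let (Θ_k)_{k≥0} be nonnegative reals, and set k = ⌈1/(1−p)⌉. Suppose g : [−1,1]^ℕ → X is continuously differentiable up to order k+1 with ‖∂^ν g(y)‖_X ≤ Θ_{|ν|} ∏_j b_j^{ν_j} for all y and all multi-indices ν with |ν| ≤ k+1, and that ‖g(y) − g(y_{≤s},0)‖_X → 0 as s → ∞ for a.e. y. Then there is a constant C > 0 independent of s such that ‖∫_{[−1,1]^ℕ} (g(y) − g(y_{≤s},0)) γ(dy)‖_X ≤ C s^{−2/p + 1}, where γ is the uniform product probability measure on [−1,1]^ℕ and (y_{≤s},0) denotes y with all coordinates beyond s set to zero. -/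

import Mathlib

open MeasureTheory Filter

/-- Truncation of a parameter sequence: the coordinates beyond the first `s` are set to
zero, `(y_{≤s}, 0)`. -/
noncomputable def trunc (s : ℕ) (y : ℕ → ℝ) : ℕ → ℝ := fun j => if j < s then y j else 0

/-- `Dg` is the family of mixed partial derivatives (in the parametric variables) of `g`
up to total order `K + 1`: `Dg 0 = g`, and for every multi-index `ν` of order `≤ K`,
differentiating `Dg ν` in the `j`-th coordinate yields `Dg (ν + e_j)`. -/
def IsPDerivFamilyUpTo {X : Type*} [NormedAddCommGroup X] [NormedSpace ℝ X]
    (g : (ℕ → ℝ) → X) (Dg : (ℕ →₀ ℕ) → (ℕ → ℝ) → X) (K : ℕ) : Prop :=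
  Dg 0 = g ∧
    ∀ ν : ℕ →₀ ℕ, (ν.sum fun _ n => n) ≤ K → ∀ (j : ℕ) (y : ℕ → ℝ),
      HasDerivAt (fun t => Dg ν (Function.update y j t))
        (Dg (ν + Finsupp.single j 1) y) (y j)

set_option maxHeartbeats 2000000 in
/-- **Dimension truncation, uniform setting.** Let `X` be a separable Banach space,
`p ∈ (0,1)`, `b` a nonincreasing nonnegative sequence with `Σ_j b_j^p < ∞`, `Θ` a
nonnegative sequence, `k = ⌈1/(1−p)⌉`. Suppose `g : [−1,1]^ℕ → X` is continuously
differentiable up to order `k+1` with `‖∂^ν g(y)‖ ≤ Θ_{|ν|} ∏_j b_j^{ν_j}` for `|ν| ≤ k+1`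
and `g(y_{≤s},0) → g(y)` a.e. Then there is `C > 0`, independent of `s`, such that
`‖∫ (g(y) − g(y_{≤s},0)) γ(dy)‖ ≤ C s^{−2/p+1}` for all `s ≥ 1`, where `γ` is the uniform
product probability measure on `[−1,1]^ℕ` (characterized by its finite-dimensional
marginals). -/
theorem dimension_truncation_uniform
    {X : Type*} [NormedAddCommGroup X] [NormedSpace ℝ X] [CompleteSpace X]
    [TopologicalSpace.SeparableSpace X]
    (p : ℝ) (hp0 : 0 < p) (hp1 : p < 1)
    (b : ℕ → ℝ) (hb0 : ∀ j, 0 ≤ b j) (hbmono : Antitone b)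
    (hbsum : Summable fun j => b j ^ p)
    (Θ : ℕ → ℝ) (hΘ : ∀ n, 0 ≤ Θ n)
    (k : ℕ) (hk : k = ⌈1 / (1 - p)⌉₊)
    (g : (ℕ → ℝ) → X) (Dg : (ℕ →₀ ℕ) → (ℕ → ℝ) → X)
    (hDg : IsPDerivFamilyUpTo g Dg k)
    (hcont : ∀ ν : ℕ →₀ ℕ, (ν.sum fun _ n => n) ≤ k + 1 → Continuous (Dg ν))
    (hbound : ∀ ν : ℕ →₀ ℕ, (ν.sum fun _ n => n) ≤ k + 1 →
      ∀ y : ℕ → ℝ, (∀ j, y j ∈ Set.Icc (-1 : ℝ) 1) →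
        ‖Dg ν y‖ ≤ Θ (ν.sum fun _ n => n) * ∏ j ∈ ν.support, b j ^ ν j)
    (γ : Measure (ℕ → ℝ)) [IsProbabilityMeasure γ]
    (hmarg : ∀ n : ℕ, γ.map (fun y (i : Fin n) => y (i : ℕ)) =
      Measure.pi fun _ : Fin n =>
        (2 : ENNReal)⁻¹ • volume.restrict (Set.Icc (-1 : ℝ) 1))
    (hlim : ∀ᵐ y ∂γ, Tendsto (fun s => g (trunc s y)) atTop (nhds (g y))) :
    ∃ C > 0, ∀ s : ℕ, 1 ≤ s →
      ‖∫ y, (g y - g (trunc s y)) ∂γ‖ ≤ C * (s : ℝ) ^ (-2 / p + 1) := by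
  classical
  obtain ⟨hDg0, hDgS⟩ := hDg
  set I : Set ℝ := Set.Icc (-1 : ℝ) 1 with hIdef
  set μ1 : Measure ℝ := (2 : ENNReal)⁻¹ • volume.restrict I with hμ1def
  have hμ1prob : IsProbabilityMeasure μ1 := by
    constructor
    rw [hμ1def, Measure.smul_apply, Measure.restrict_apply MeasurableSet.univ, Set.univ_inter,
      hIdef, Real.volume_Icc, smul_eq_mul]
    norm_num
    exact ENNReal.inv_mul_cancel (by norm_num) (by norm_num)
  have hμ1null : μ1 Iᶜ = 0 := by
    rw [hμ1def, Measure.smul_apply, Measure.restrict_apply (measurableSet_Icc.compl)]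
    simp [hIdef]
  have hμ1id : ∫ t, t ∂μ1 = 0 := by
    rw [hμ1def, integral_smul_measure, hIdef, setIntegral_congr_set Ioc_ae_eq_Icc.symm,
      ← intervalIntegral.integral_of_le (by norm_num : (-1:ℝ) ≤ 1), integral_id]
    norm_num
  have hp1' : (0:ℝ) < 1 - p := by linarith
  have hk1 : 1 ≤ k := by
    rw [hk]
    exact Nat.one_le_ceil_iff.mpr (by positivity)
  -- continuity facts
  have hconttrunc : ∀ s, Continuous (trunc s) := by
    intro s
    apply continuous_pi
    intro j
    unfold trunc
    by_cases h : j < s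
    · simpa [h] using continuous_apply j
    · simp only [h, if_false]
      exact continuous_const
  have hcontg : Continuous g := by
    rw [← hDg0]
    exact hcont 0 (by simp)
  -- finsupp computations
  have hsum1 : ∀ m : ℕ, ((Finsupp.single m 1).sum fun _ n => n) = 1 := fun m =>
    Finsupp.sum_single_index rfl
  have hsum2 : ∀ m : ℕ, ((Finsupp.single m 2).sum fun _ n => n) = 2 := fun m =>
    Finsupp.sum_single_index rfl
  -- norm bounds, pointwise on the cube
  have hgb : ∀ y : ℕ → ℝ, (∀ j, y j ∈ I) → ‖g y‖ ≤ Θ 0 := by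
    intro y hy
    have := hbound 0 (by simp) y hy
    simpa [hDg0] using this
  have hD1b : ∀ m : ℕ, ∀ y : ℕ → ℝ, (∀ j, y j ∈ I) →
      ‖Dg (Finsupp.single m 1) y‖ ≤ Θ 1 * b m := by
    intro m y hy
    have := hbound (Finsupp.single m 1) (by rw [hsum1]; omega) y hy
    rwa [hsum1, Finsupp.support_single_ne_zero m one_ne_zero, Finset.prod_singleton,
      Finsupp.single_eq_same, pow_one] at this
  have hD2b : ∀ m : ℕ, ∀ y : ℕ → ℝ, (∀ j, y j ∈ I) →
      ‖Dg (Finsupp.single m 2) y‖ ≤ Θ 2 * b m ^ 2 := by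
    intro m y hy
    have := hbound (Finsupp.single m 2) (by rw [hsum2]; omega) y hy
    rwa [hsum2, Finsupp.support_single_ne_zero m two_ne_zero, Finset.prod_singleton,
      Finsupp.single_eq_same] at this
  -- membership facts
  have htruncmem : ∀ s : ℕ, ∀ y : ℕ → ℝ, (∀ j, y j ∈ I) → ∀ j, trunc s y j ∈ I := by
    intro s y hy j
    unfold trunc
    by_cases h : j < s
    · simpa [h] using hy j
    · simp only [h, if_false]
      constructor <;> norm_num
  -- the cube has full measure
  have hcoord : ∀ j : ℕ, γ {y : ℕ → ℝ | y j ∉ I} = 0 := by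
    intro j
    have hπmeas : Measurable (fun (y : ℕ → ℝ) (i : Fin (j+1)) => y (i:ℕ)) :=
      measurable_pi_lambda _ fun i => measurable_pi_apply _
    have hset : {y : ℕ → ℝ | y j ∉ I}
        = (fun (y : ℕ → ℝ) (i : Fin (j+1)) => y (i:ℕ)) ⁻¹'
          (Function.eval (⟨j, Nat.lt_succ_self j⟩ : Fin (j+1)) ⁻¹' Iᶜ) := rfl
    rw [hset, ← Measure.map_apply hπmeas
      ((measurableSet_Icc.compl).preimage (measurable_pi_apply _)), hmarg (j+1)]
    exact Measure.pi_eval_preimage_null (fun _ : Fin (j+1) => μ1) hμ1null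
  have hcube : ∀ᵐ y ∂γ, ∀ j, y j ∈ I := by
    rw [ae_all_iff]
    intro j
    rw [ae_iff]
    exact hcoord j
  -- integrability of g ∘ trunc s and g
  have hint : ∀ s : ℕ, Integrable (fun y => g (trunc s y)) γ := by
    intro s
    refine ⟨(hcontg.comp (hconttrunc s)).aestronglyMeasurable, ?_⟩
    refine HasFiniteIntegral.of_bounded (C := Θ 0) ?_
    filter_upwards [hcube] with y hy
    exact hgb _ (htruncmem s y hy)
  have hintg : Integrable g γ := by
    refine ⟨hcontg.aestronglyMeasurable, ?_⟩
    refine HasFiniteIntegral.of_bounded (C := Θ 0) ?_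
    filter_upwards [hcube] with y hy
    exact hgb _ hy
  -- ==== the single-step estimate ====
  have hstep : ∀ m : ℕ, ‖∫ y, (g (trunc (m+1) y) - g (trunc m y)) ∂γ‖ ≤ Θ 2 * b m ^ 2 := by
    intro m
    set D1 : (ℕ → ℝ) → X := Dg (Finsupp.single m 1) with hD1
    have hD1cont : Continuous D1 := hcont _ (by rw [hsum1]; omega)
    set F : (ℕ → ℝ) → X := fun y => (y m) • D1 (trunc m y) with hF
    set v : (ℕ → ℝ) → X := fun y => g (trunc (m+1) y) - g (trunc m y) - F y with hv
    -- pointwise second-order estimate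
    have hvb : ∀ y : ℕ → ℝ, (∀ j, y j ∈ I) → ‖v y‖ ≤ Θ 2 * b m ^ 2 := by
      intro y hy
      set z : ℕ → ℝ := trunc m y with hz
      have hzm : z m = 0 := by simp [hz, trunc]
      have hz0 : Function.update z m 0 = z := by
        rw [← hzm]; exact Function.update_eq_self m z
      have hzy : Function.update z m (y m) = trunc (m+1) y := by
        funext j
        rcases eq_or_ne j m with rfl | hj
        · simp [trunc]
        · simp only [Function.update_of_ne hj, hz, trunc]
          by_cases h : j < m
          · have h2 : j < m + 1 := by omega
            simp [h, h2]
          · have h2 : ¬ j < m + 1 := by omega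
            simp [h, h2]
      have hzmem : ∀ t : ℝ, t ∈ I → ∀ j, Function.update z m t j ∈ I := by
        intro t ht j
        rcases eq_or_ne j m with rfl | hj
        · simpa using ht
        · rw [Function.update_of_ne hj]
          exact htruncmem m y hy j
      -- derivative facts
      have hu' : ∀ t : ℝ, HasDerivAt (fun τ => g (Function.update z m τ))
          (D1 (Function.update z m t)) t := by
        intro t
        have h := hDgS 0 (by simp) m (Function.update z m t)
        simp only [Function.update_idem, Function.update_self, zero_add, hDg0] at h
        exact h
      have hD1' : ∀ t : ℝ, HasDerivAt (fun τ => D1 (Function.update z m τ))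
          (Dg (Finsupp.single m 2) (Function.update z m t)) t := by
        intro t
        have h := hDgS (Finsupp.single m 1) (by rw [hsum1]; omega) m (Function.update z m t)
        rw [← Finsupp.single_add] at h
        simp only [Function.update_idem, Function.update_self] at h
        exact h
      -- first MVT : Lipschitz bound for D1 along the segment
      have hMVT1 : ∀ t ∈ I, ‖D1 (Function.update z m t) - D1 z‖ ≤ Θ 2 * b m ^ 2 := by
        intro t ht
        have := Convex.norm_image_sub_le_of_norm_hasDerivWithin_le
          (f := fun τ => D1 (Function.update z m τ))
          (f' := fun τ => Dg (Finsupp.single m 2) (Function.update z m τ))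
          (C := Θ 2 * b m ^ 2) (s := I)
          (fun x hx => (hD1' x).hasDerivWithinAt)
          (fun x hx => hD2b m _ (hzmem x hx))
          (convex_Icc _ _) (show (0:ℝ) ∈ I by rw [hIdef]; norm_num [Set.mem_Icc]) ht
        simp only [hz0] at this
        calc ‖D1 (Function.update z m t) - D1 z‖ ≤ Θ 2 * b m ^ 2 * ‖t - 0‖ := this
          _ ≤ Θ 2 * b m ^ 2 * 1 := by
              refine mul_le_mul_of_nonneg_left ?_ (mul_nonneg (hΘ 2) (sq_nonneg _))
              rw [sub_zero, Real.norm_eq_abs]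
              exact abs_le.mpr ⟨ht.1, ht.2⟩
          _ = Θ 2 * b m ^ 2 := mul_one _
      -- second MVT
      have hMVT2 : ‖(g (Function.update z m (y m)) - (y m) • D1 z) - g z‖ ≤ Θ 2 * b m ^ 2 := by
        have hf2 : ∀ t : ℝ, HasDerivAt (fun τ => g (Function.update z m τ) - τ • D1 z)
            (D1 (Function.update z m t) - D1 z) t := by
          intro t
          have h2 : HasDerivAt (fun τ : ℝ => τ • D1 z) ((1:ℝ) • D1 z) t :=
            (hasDerivAt_id t).smul_const (D1 z)
          exact ((hu' t).sub h2).congr_deriv (by simp)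
        have := Convex.norm_image_sub_le_of_norm_hasDerivWithin_le
          (f := fun τ => g (Function.update z m τ) - τ • D1 z)
          (f' := fun τ => D1 (Function.update z m τ) - D1 z)
          (C := Θ 2 * b m ^ 2) (s := I)
          (fun x hx => (hf2 x).hasDerivWithinAt)
          (fun x hx => hMVT1 x hx)
          (convex_Icc _ _) (show (0:ℝ) ∈ I by rw [hIdef]; norm_num [Set.mem_Icc]) (hy m)
        simp only [hz0] at this
        calc ‖(g (Function.update z m (y m)) - (y m) • D1 z) - g z‖
            = ‖(g (Function.update z m (y m)) - (y m) • D1 z) - (g z - (0:ℝ) • D1 z)‖ := by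
              rw [zero_smul, sub_zero]
          _ ≤ Θ 2 * b m ^ 2 * ‖y m - 0‖ := this
          _ ≤ Θ 2 * b m ^ 2 * 1 := by
              refine mul_le_mul_of_nonneg_left ?_ (mul_nonneg (hΘ 2) (sq_nonneg _))
              rw [sub_zero, Real.norm_eq_abs]
              exact abs_le.mpr ⟨(hy m).1, (hy m).2⟩
          _ = Θ 2 * b m ^ 2 := mul_one _
      have : v y = (g (Function.update z m (y m)) - (y m) • D1 z) - g z := by
        rw [hzy]
        simp only [hv, hF, ← hz]
        abel
      rw [this]
      exact hMVT2
    -- integrability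
    have hFcont : Continuous F :=
      (continuous_apply m).smul (hD1cont.comp (hconttrunc m))
    have hvcont : Continuous v :=
      ((hcontg.comp (hconttrunc (m+1))).sub (hcontg.comp (hconttrunc m))).sub hFcont
    have hFb : ∀ᵐ y ∂γ, ‖F y‖ ≤ Θ 1 * b m := by
      filter_upwards [hcube] with y hy
      rw [hF, norm_smul, Real.norm_eq_abs]
      calc |y m| * ‖D1 (trunc m y)‖ ≤ 1 * (Θ 1 * b m) := by
            refine mul_le_mul (abs_le.mpr ⟨(hy m).1, (hy m).2⟩)
              (hD1b m _ (htruncmem m y hy)) (norm_nonneg _) zero_le_one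
        _ = Θ 1 * b m := one_mul _
    have hFint : Integrable F γ :=
      ⟨hFcont.aestronglyMeasurable, HasFiniteIntegral.of_bounded hFb⟩
    have hvint : Integrable v γ := by
      refine ⟨hvcont.aestronglyMeasurable, HasFiniteIntegral.of_bounded (C := Θ 2 * b m ^ 2) ?_⟩
      filter_upwards [hcube] with y hy
      exact hvb y hy
    -- the linear term integrates to zero
    have hFzero : ∫ y, F y ∂γ = 0 := by
      haveI := hμ1prob
      set piμ : Measure (Fin m → ℝ) := Measure.pi (fun _ : Fin m => μ1) with hpiμ
      set ext1 : (Fin (m+1) → ℝ) → (ℕ → ℝ) :=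
        fun x j => if h : j < m then x ⟨j, by omega⟩ else 0 with hext1
      set ext2 : (Fin m → ℝ) → (ℕ → ℝ) :=
        fun x j => if h : j < m then x ⟨j, h⟩ else 0 with hext2
      have hext1cont : Continuous ext1 := by
        apply continuous_pi
        intro j
        by_cases h : j < m
        · simpa [hext1, h] using continuous_apply (⟨j, by omega⟩ : Fin (m+1))
        · simp only [hext1, h, dif_neg, not_false_iff]
          exact continuous_const
      have hext2cont : Continuous ext2 := by
        apply continuous_pi
        intro j
        by_cases h : j < m
        · simpa [hext2, h] using continuous_apply (⟨j, h⟩ : Fin m)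
        · simp only [hext2, h, dif_neg, not_false_iff]
          exact continuous_const
      have hext2mem : ∀ x : Fin m → ℝ, (∀ i, x i ∈ I) → ∀ j, ext2 x j ∈ I := by
        intro x hx j
        by_cases h : j < m
        · simpa [hext2, h] using hx ⟨j, h⟩
        · simp only [hext2, h, dif_neg, not_false_iff]
          rw [hIdef]; norm_num [Set.mem_Icc]
      set G : (Fin (m+1) → ℝ) → X := fun x => (x (Fin.last m)) • D1 (ext1 x) with hG
      set G' : ℝ × (Fin m → ℝ) → X := fun z => z.1 • D1 (ext2 z.2) with hG'
      have hGcont : Continuous G :=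
        (continuous_apply (Fin.last m)).smul (hD1cont.comp hext1cont)
      have hG'cont : Continuous G' :=
        continuous_fst.smul (hD1cont.comp (hext2cont.comp continuous_snd))
      have hFG : ∀ y : ℕ → ℝ, F y = G (fun i : Fin (m+1) => y (i:ℕ)) := by
        intro y
        have hext1y : ext1 (fun i : Fin (m+1) => y (i:ℕ)) = trunc m y := by
          funext j
          by_cases h : j < m
          · simp [hext1, h, trunc]
          · simp [hext1, h, trunc]
        simp only [hF, hG, Fin.val_last]
        rw [hext1y]
      have hπae : AEMeasurable (fun (y : ℕ → ℝ) (i : Fin (m+1)) => y (i:ℕ)) γ :=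
        (measurable_pi_lambda _ fun i => measurable_pi_apply _).aemeasurable
      have hmp := measurePreserving_piFinSuccAbove (fun _ : Fin (m+1) => μ1) (Fin.last m)
      have hGG' : ∀ x : Fin (m+1) → ℝ,
          G x = G' (MeasurableEquiv.piFinSuccAbove (fun _ => ℝ) (Fin.last m) x) := by
        intro x
        have he : MeasurableEquiv.piFinSuccAbove (fun _ => ℝ) (Fin.last m) x
            = (x (Fin.last m), fun j : Fin m => x ((Fin.last m).succAbove j)) := rfl
        simp only [hG, hG', he]
        have : ext2 (fun j : Fin m => x ((Fin.last m).succAbove j)) = ext1 x := by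
          funext j
          by_cases h : j < m
          · simp only [hext2, hext1, h, dif_pos]
            congr 1
            rw [Fin.succAbove_last, Fin.castSucc_mk]
          · simp [hext2, hext1, h]
        rw [this]
      -- pointwise bound on the product space
      have hpiae : ∀ᵐ x ∂piμ, ∀ i, x i ∈ I := by
        rw [ae_all_iff]
        intro i
        rw [ae_iff]
        exact Measure.pi_eval_preimage_null (fun _ : Fin m => μ1) hμ1null
      have h1ae : ∀ᵐ t ∂μ1, t ∈ I := by
        rw [ae_iff]
        exact hμ1null
      have hprodae : ∀ᵐ z ∂(μ1.prod piμ), z.1 ∈ I ∧ ∀ i, z.2 i ∈ I := by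
        rw [ae_iff]
        refine measure_mono_null (t := (Iᶜ ×ˢ Set.univ) ∪
          (Set.univ ×ˢ {x : Fin m → ℝ | ¬ ∀ i, x i ∈ I})) ?_ ?_
        · intro z hz
          simp only [Set.mem_setOf_eq, not_and_or] at hz
          rcases hz with hz | hz
          · exact Or.inl ⟨hz, Set.mem_univ _⟩
          · exact Or.inr ⟨Set.mem_univ _, hz⟩
        · refine measure_union_null ?_ ?_
          · rw [Measure.prod_prod, hμ1null, zero_mul]
          · rw [Measure.prod_prod, ae_iff.mp hpiae, mul_zero]
      have hG'bnd : ∀ᵐ z ∂(μ1.prod piμ), ‖G' z‖ ≤ Θ 1 * b m := by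
        filter_upwards [hprodae] with z hz
        rw [hG', norm_smul, Real.norm_eq_abs]
        calc |z.1| * ‖D1 (ext2 z.2)‖ ≤ 1 * (Θ 1 * b m) := by
              refine mul_le_mul ?_ (hD1b m _ (hext2mem _ hz.2)) (norm_nonneg _) zero_le_one
              have := hz.1
              rw [hIdef] at this
              exact abs_le.mpr ⟨this.1, this.2⟩
          _ = Θ 1 * b m := one_mul _
      have hG'int : Integrable G' (μ1.prod piμ) :=
        ⟨hG'cont.aestronglyMeasurable, HasFiniteIntegral.of_bounded hG'bnd⟩
      calc ∫ y, F y ∂γ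
          = ∫ y, G (fun i : Fin (m+1) => y (i:ℕ)) ∂γ := by
            exact integral_congr_ae (Filter.Eventually.of_forall hFG)
        _ = ∫ x, G x ∂(γ.map (fun y (i : Fin (m+1)) => y (i:ℕ))) :=
            (integral_map hπae hGcont.aestronglyMeasurable).symm
        _ = ∫ x, G x ∂(Measure.pi fun _ : Fin (m+1) => μ1) := by rw [hmarg (m+1)]
        _ = ∫ z, G' z ∂(μ1.prod piμ) := by
            rw [show (fun x : Fin (m+1) → ℝ => G x) = fun x =>
              G' (MeasurableEquiv.piFinSuccAbove (fun _ => ℝ) (Fin.last m) x) from funext hGG']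
            exact hmp.integral_comp' G'
        _ = ∫ t, ∫ x, G' (t, x) ∂piμ ∂μ1 := integral_prod _ hG'int
        _ = ∫ t, t • (∫ x, D1 (ext2 x) ∂piμ) ∂μ1 := by
            refine integral_congr_ae (Filter.Eventually.of_forall fun t => ?_)
            exact integral_smul t _
        _ = (∫ t, t ∂μ1) • (∫ x, D1 (ext2 x) ∂piμ) := integral_smul_const _ _
        _ = 0 := by rw [hμ1id, zero_smul]
    have hdecomp : (fun y => g (trunc (m+1) y) - g (trunc m y)) = fun y => v y + F y := by
      funext y; simp [hv]
    rw [hdecomp, integral_add hvint hFint, hFzero, add_zero]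
    calc ‖∫ y, v y ∂γ‖ ≤ (Θ 2 * b m ^ 2) * (γ Set.univ).toReal :=
          norm_integral_le_of_norm_le_const (by filter_upwards [hcube] with y hy using hvb y hy)
      _ = Θ 2 * b m ^ 2 := by simp
  -- ==== summation and limit ====
  obtain ⟨B, hB⟩ : ∃ B : ℝ, B = ∑' j, b j ^ p := ⟨_, rfl⟩
  have hBnn : 0 ≤ B := hB ▸ tsum_nonneg fun j => Real.rpow_nonneg (hb0 j) p
  have hq2 : (0:ℝ) < 2 - p := by linarith
  refine ⟨Θ 2 * B ^ ((2:ℝ)/p) + 1,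
    add_pos_of_nonneg_of_pos (mul_nonneg (hΘ 2) (Real.rpow_nonneg hBnn _)) one_pos, ?_⟩
  intro s hs
  have hspos : (0:ℝ) < s := by exact_mod_cast hs
  have htail : ∀ M : ℕ, s ≤ M →
      ‖∫ y, (g (trunc M y) - g (trunc s y)) ∂γ‖ ≤ Θ 2 * b s ^ ((2:ℝ) - p) * B := by
    intro M hM
    have hdecomp : (fun y => g (trunc M y) - g (trunc s y))
        = fun y => ∑ i ∈ Finset.range (M - s),
            (g (trunc (s+i+1) y) - g (trunc (s+i) y)) := by
      funext y
      have h := Finset.sum_range_sub (f := fun i => g (trunc (s+i) y)) (n := M - s)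
      rw [Nat.add_sub_cancel' hM, Nat.add_zero] at h
      exact h.symm
    have hIsub : ∀ i : ℕ, Integrable (fun y => g (trunc (s+i+1) y) - g (trunc (s+i) y)) γ :=
      fun i => (hint (s+i+1)).sub (hint (s+i))
    rw [hdecomp, integral_finset_sum _ (fun i _ => hIsub i)]
    have hterm : ∀ i : ℕ, Θ 2 * b (s+i) ^ 2 ≤ Θ 2 * (b s ^ ((2:ℝ) - p) * b (s+i) ^ p) := by
      intro i
      refine mul_le_mul_of_nonneg_left ?_ (hΘ 2)
      have h1 : b (s+i) ^ 2 = b (s+i) ^ ((2:ℝ)) := by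
        rw [← Real.rpow_natCast (b (s+i)) 2]
        norm_num
      have h2 : b (s+i) ^ ((2:ℝ)) = b (s+i) ^ ((2:ℝ) - p) * b (s+i) ^ p := by
        rw [← Real.rpow_add' (hb0 _) (by norm_num : ((2:ℝ) - p) + p ≠ 0)]
        norm_num
      rw [h1, h2]
      exact mul_le_mul_of_nonneg_right
        (Real.rpow_le_rpow (hb0 _) (hbmono (Nat.le_add_right s i)) hq2.le)
        (Real.rpow_nonneg (hb0 _) p)
    calc ‖∑ i ∈ Finset.range (M-s), ∫ y, (g (trunc (s+i+1) y) - g (trunc (s+i) y)) ∂γ‖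
        ≤ ∑ i ∈ Finset.range (M-s), ‖∫ y, (g (trunc (s+i+1) y) - g (trunc (s+i) y)) ∂γ‖ :=
          norm_sum_le _ _
      _ ≤ ∑ i ∈ Finset.range (M-s), Θ 2 * b (s+i) ^ 2 :=
          Finset.sum_le_sum fun i _ => hstep (s+i)
      _ ≤ ∑ i ∈ Finset.range (M-s), Θ 2 * (b s ^ ((2:ℝ) - p) * b (s+i) ^ p) :=
          Finset.sum_le_sum fun i _ => hterm i
      _ = Θ 2 * b s ^ ((2:ℝ) - p) * ∑ i ∈ Finset.range (M-s), b (s+i) ^ p := by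
          rw [Finset.mul_sum]
          refine Finset.sum_congr rfl fun i _ => by ring
      _ ≤ Θ 2 * b s ^ ((2:ℝ) - p) * B := by
          refine mul_le_mul_of_nonneg_left ?_
            (mul_nonneg (hΘ 2) (Real.rpow_nonneg (hb0 s) _))
          rw [← Finset.sum_Ico_eq_sum_range (f := fun j => b j ^ p), hB]
          exact Summable.sum_le_tsum _ (fun j _ => Real.rpow_nonneg (hb0 j) p) hbsum
  have hdct : Tendsto (fun M => ∫ y, (g (trunc M y) - g (trunc s y)) ∂γ) atTop
      (nhds (∫ y, (g y - g (trunc s y)) ∂γ)) := by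
    refine tendsto_integral_of_dominated_convergence (fun _ => 2 * Θ 0)
      (fun M => ((hcontg.comp (hconttrunc M)).sub
        (hcontg.comp (hconttrunc s))).aestronglyMeasurable)
      (integrable_const _) (fun M => ?_) ?_
    · filter_upwards [hcube] with y hy
      calc ‖g (trunc M y) - g (trunc s y)‖
          ≤ ‖g (trunc M y)‖ + ‖g (trunc s y)‖ := norm_sub_le _ _
        _ ≤ Θ 0 + Θ 0 := add_le_add (hgb _ (htruncmem M y hy)) (hgb _ (htruncmem s y hy))
        _ = 2 * Θ 0 := by ring
    · filter_upwards [hlim] with y hy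
      exact hy.sub tendsto_const_nhds
  have hlimb : ‖∫ y, (g y - g (trunc s y)) ∂γ‖ ≤ Θ 2 * b s ^ ((2:ℝ) - p) * B :=
    le_of_tendsto hdct.norm (Filter.eventually_atTop.mpr ⟨s, htail⟩)
  -- arithmetic
  have hbsB : b s ^ p * s ≤ B := by
    calc b s ^ p * s = ∑ _j ∈ Finset.range s, b s ^ p := by
          rw [Finset.sum_const, Finset.card_range, nsmul_eq_mul]
          ring
      _ ≤ ∑ j ∈ Finset.range s, b j ^ p := Finset.sum_le_sum fun j hj =>
          Real.rpow_le_rpow (hb0 s) (hbmono (le_of_lt (Finset.mem_range.mp hj))) hp0.le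
      _ ≤ B := hB ▸ Summable.sum_le_tsum _ (fun j _ => Real.rpow_nonneg (hb0 j) p) hbsum
  have hbsp : b s ^ p ≤ B / s := (le_div_iff₀ hspos).mpr hbsB
  obtain ⟨q, hqdef⟩ : ∃ q : ℝ, q = (2 - p)/p := ⟨_, rfl⟩
  have hqpos : 0 < q := hqdef ▸ div_pos hq2 hp0
  have h2 : b s ^ ((2:ℝ) - p) = (b s ^ p) ^ q := by
    rw [← Real.rpow_mul (hb0 s)]
    congr 1
    rw [hqdef]
    field_simp
  have h3 : (b s ^ p) ^ q ≤ (B/(s:ℝ)) ^ q :=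
    Real.rpow_le_rpow (Real.rpow_nonneg (hb0 s) p) hbsp hqpos.le
  have h4 : (B/(s:ℝ)) ^ q = B ^ q * ((s:ℝ) ^ q)⁻¹ := by
    rw [Real.div_rpow hBnn hspos.le, div_eq_mul_inv]
  have e1 : B ^ q * B = B ^ ((2:ℝ)/p) := by
    have hpne : p ≠ 0 := ne_of_gt hp0
    have : ((2:ℝ)/p) = q + 1 := by
      rw [hqdef, show (1:ℝ) = p/p from (div_self hpne).symm, ← add_div]
      ring_nf
    rw [this, Real.rpow_add' hBnn (ne_of_gt (add_pos hqpos one_pos)), Real.rpow_one]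
  have e2 : ((s:ℝ) ^ q)⁻¹ = (s:ℝ) ^ (-2 / p + 1) := by
    rw [← Real.rpow_neg hspos.le]
    congr 1
    have hpne : p ≠ 0 := ne_of_gt hp0
    have h5 : -((2 - p)/p) = (p - 2)/p := by rw [← neg_div, neg_sub]
    have h6 : (-2)/p + 1 = (p - 2)/p := by
      rw [show (1:ℝ) = p/p from (div_self hpne).symm, ← add_div]
      ring_nf
    rw [hqdef, h5, h6]
  calc ‖∫ y, (g y - g (trunc s y)) ∂γ‖ ≤ Θ 2 * b s ^ ((2:ℝ) - p) * B := hlimb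
    _ ≤ Θ 2 * (B ^ q * ((s:ℝ) ^ q)⁻¹) * B := by
        refine mul_le_mul_of_nonneg_right (mul_le_mul_of_nonneg_left ?_ (hΘ 2)) hBnn
        rw [h2, ← h4]
        exact h3
    _ = (Θ 2 * B ^ ((2:ℝ)/p)) * (s:ℝ) ^ (-2 / p + 1) := by
        rw [← e1, ← e2]
        ring
    _ ≤ (Θ 2 * B ^ ((2:ℝ)/p) + 1) * (s:ℝ) ^ (-2 / p + 1) := by
        refine mul_le_mul_of_nonneg_right ?_ (Real.rpow_nonneg hspos.le _)
        linarith
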